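/- Let k : (0,∞) → [0,∞) be nonincreasing and lower semicontinuous, and let σ be a locally finite positive Borel measure on ℝ^n satisfying a doubling condition. Then there exists C > 0 such that for every x ∈ ℝ^n and every r > 0, (1/C) k̄(r)(x) ≤ (1/σ(B(x,r))) ∫_{B(x,r)} k(|x−y|) dσ(y) ≤ C k̄(r)(x). -/

import Mathlib

open MeasureTheory ENNReal Set Metric Function
open scoped Classical ENNReal NNReal

noncomputable section

/-- We model `ℝ^n` as `EuclideanSpace ℝ (Fin n)`. -/
abbrev Euc (n : ℕ) := EuclideanSpace ℝ (Fin n)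

/-- `k̄(r)(x) = (1/σ(B(x,r))) ∫_0^r k(s) σ(B(x,s)) ds/s`. -/
def kbar (n : ℕ) (σ : Measure (Euc n)) (k : ℝ → ℝ) (r : ℝ) (x : Euc n) : ℝ≥0∞ :=
  (σ (ball x r))⁻¹ * ∫⁻ s in Ioo (0:ℝ) r, ENNReal.ofReal (k s / s) * σ (ball x s)

/-- `σ` is a doubling measure: `σ(B(x,2r)) ≤ C₀ σ(B(x,r))` for all `x`, `r > 0`. -/
def Doubling (n : ℕ) (σ : Measure (Euc n)) : Prop :=
  ∃ C₀ : ℝ, 0 < C₀ ∧ ∀ (x : Euc n) (r : ℝ), 0 < r →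
    σ (ball x (2 * r)) ≤ ENNReal.ofReal C₀ * σ (ball x r)

/-- The pair `(k,σ)` satisfies the logarithmic bounded oscillation (LBO) condition:
`sup_{y ∈ B(x,r)} k̄(r)(y) ≤ A inf_{y ∈ B(x,r)} k̄(r)(y)` uniformly in `x`, `r`. -/
def LBO (n : ℕ) (σ : Measure (Euc n)) (k : ℝ → ℝ) : Prop :=
  ∃ A : ℝ, 0 < A ∧ ∀ (x : Euc n) (r : ℝ), 0 < r →
    ∀ y ∈ ball x r, ∀ z ∈ ball x r, kbar n σ k r y ≤ ENNReal.ofReal A * kbar n σ k r z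

lemma measK0 (k : ℝ → ℝ) (hmono : AntitoneOn k (Ioi (0:ℝ))) :
    Measurable ((Ioi (0:ℝ)).indicator (fun t => ENNReal.ofReal (k t))) := by
  have hfun : (Ioi (0:ℝ)).indicator (fun t => ENNReal.ofReal (k t)) =
      fun t => ⨆ m : ℕ, (Ici (1/(m+1) : ℝ)).indicator
        (fun t => ENNReal.ofReal (k (max t (1/(m+1))))) t := by
    funext t
    rcases le_or_gt t 0 with ht | ht
    · rw [indicator_of_notMem (by simpa using not_lt.2 ht)]
      symm
      simp only [ENNReal.iSup_eq_zero]
      intro m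
      rw [indicator_of_notMem]
      simp only [mem_Ici, not_le]
      exact lt_of_le_of_lt ht (by positivity)
    · rw [indicator_of_mem (mem_Ioi.2 ht)]
      apply le_antisymm
      · obtain ⟨m, hm⟩ := exists_nat_one_div_lt ht
        refine le_iSup_of_le m ?_
        rw [indicator_of_mem (mem_Ici.2 hm.le), max_eq_left hm.le]
      · refine iSup_le fun m => ?_
        rcases le_or_gt (1/(m+1) : ℝ) t with h | h
        · rw [indicator_of_mem (mem_Ici.2 h), max_eq_left h]
        · rw [indicator_of_notMem (by simpa using h)]
          exact zero_le
  rw [hfun]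
  refine Measurable.iSup fun m => Measurable.indicator ?_ measurableSet_Ici
  have hanti : Antitone fun t : ℝ => k (max t (1/(m+1))) := by
    intro a b hab
    have h1 : (0:ℝ) < 1/(m+1) := by positivity
    exact hmono (mem_Ioi.2 (lt_of_lt_of_le h1 (le_max_right _ _)))
      (mem_Ioi.2 (lt_of_lt_of_le h1 (le_max_right _ _))) (max_le_max hab le_rfl)
  exact hanti.measurable.ennreal_ofReal

lemma atom_zero {n : ℕ} (hn : 0 < n) (σ : Measure (Euc n)) [IsLocallyFiniteMeasure σ]
    (C₀ : ℝ) (hD : ∀ (x : Euc n) (ρ : ℝ), 0 < ρ →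
      σ (ball x (2 * ρ)) ≤ ENNReal.ofReal C₀ * σ (ball x ρ)) (x : Euc n) :
    σ {x} = 0 := by
  -- find a finite ball
  obtain ⟨U, hU, hUfin⟩ := σ.finiteAt_nhds x
  obtain ⟨ε, hε, hball⟩ := Metric.mem_nhds_iff.1 hU
  -- the translation direction
  set e : Euc n := EuclideanSpace.single ⟨0, hn⟩ (1:ℝ) with he
  have hnorme : ‖e‖ = 1 := by
    rw [he, EuclideanSpace.norm_single]; norm_num
  -- key estimate
  have key : ∀ t : ℝ, 0 < t → σ {x} ≤ ENNReal.ofReal C₀ * σ (ball x (2*t) \ {x}) := by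
    intro t ht
    set z : Euc n := x + t • e with hz
    have hdist : dist x z = t := by
      rw [hz, dist_self_add_right, norm_smul, hnorme]
      simp [abs_of_pos ht]
    calc σ {x} ≤ σ (ball z (2*t)) := by
          apply measure_mono
          intro y hy
          simp only [mem_singleton_iff] at hy
          subst hy
          simpa [mem_ball, dist_comm z y, hdist] using by linarith
      _ ≤ ENNReal.ofReal C₀ * σ (ball z t) := hD z t ht
      _ ≤ ENNReal.ofReal C₀ * σ (ball x (2*t) \ {x}) := by
          gcongr
          intro y hy
          simp only [mem_ball] at hy
          constructor
          · have := dist_triangle y z x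
            rw [dist_comm z x, hdist] at this
            simp only [mem_ball]
            linarith
          · simp only [mem_singleton_iff]
            intro hyx
            rw [hyx] at hy
            rw [hdist] at hy
            exact lt_irrefl t hy
  -- shrinking family
  set s : ℕ → Set (Euc n) := fun m => ball x (ε/(m+1)) \ {x} with hs
  have hanti : Antitone s := by
    intro a b hab
    apply diff_subset_diff_left
    apply ball_subset_ball
    apply div_le_div_of_nonneg_left hε.le (by positivity)
    exact_mod_cast by omega
  have hiInter : (⋂ m, s m) = ∅ := by
    ext y
    simp only [mem_iInter, mem_empty_iff_false, iff_false, hs, mem_diff, mem_ball,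
      mem_singleton_iff, not_forall]
    by_contra h
    push_neg at h
    have hy : y ≠ x := (h 0).2
    have hd : 0 < dist y x := dist_pos.2 hy
    obtain ⟨m, hm⟩ := exists_nat_gt (ε / dist y x)
    refine absurd ((h m).1) (not_lt.2 ?_)
    rw [div_le_iff₀ (by positivity)] at *
    calc ε ≤ dist y x * m := by
          rw [div_lt_iff₀ hd] at hm
          linarith
      _ ≤ dist y x * (m+1) := by nlinarith [hd]
  have htend : Filter.Tendsto (σ ∘ s) Filter.atTop (nhds 0) := by
    have := tendsto_measure_iInter_atTop (μ := σ) (s := s)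
      (fun m => ((measurableSet_ball).diff (measurableSet_singleton _)).nullMeasurableSet)
      hanti ⟨0, ?_⟩
    · rwa [hiInter, measure_empty] at this
    · refine ne_of_lt (lt_of_le_of_lt (measure_mono ?_) hUfin)
      refine subset_trans (diff_subset) (subset_trans ?_ hball)
      apply ball_subset_ball
      simp
  have htend2 : Filter.Tendsto (fun m => ENNReal.ofReal C₀ * σ (s m)) Filter.atTop (nhds 0) := by
    have := ENNReal.Tendsto.const_mul (a := ENNReal.ofReal C₀) htend (Or.inr ofReal_ne_top)
    simpa using this
  have hle : ∀ m : ℕ, σ {x} ≤ ENNReal.ofReal C₀ * σ (s m) := by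
    intro m
    have h2 : (0:ℝ) < ε/(2*(m+1)) := by positivity
    have := key _ h2
    rw [show 2 * (ε/(2*((m:ℝ)+1))) = ε/((m:ℝ)+1) by field_simp] at this
    exact this
  have := ge_of_tendsto' htend2 hle
  simpa using this

lemma annulus_bound {n : ℕ} (hn : 0 < n) (σ : Measure (Euc n)) (C₀ : ℝ) (hC₀ : 0 ≤ C₀)
    (hD : ∀ (x : Euc n) (ρ : ℝ), 0 < ρ →
      σ (ball x (2 * ρ)) ≤ ENNReal.ofReal C₀ * σ (ball x ρ)) (x : Euc n) (s : ℝ) (hs : 0 < s) :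
    σ (ball x s) ≤ ENNReal.ofReal (C₀^4) * σ {y | s/2 ≤ dist x y ∧ dist x y < s} := by
  set e : Euc n := EuclideanSpace.single ⟨0, hn⟩ (1:ℝ) with he
  have hnorme : ‖e‖ = 1 := by rw [he, EuclideanSpace.norm_single]; norm_num
  set z : Euc n := x + (3*s/4) • e with hz
  have hdist : dist x z = 3*s/4 := by
    rw [hz, dist_self_add_right, norm_smul, hnorme]
    rw [mul_one, Real.norm_eq_abs, abs_of_pos (by linarith)]
  have h0 : σ (ball x s) ≤ σ (ball z (2*s)) := by
    apply measure_mono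
    intro y hy
    rw [mem_ball] at *
    have := dist_triangle y x z
    rw [hdist] at this
    linarith
  have h1 := hD z s hs
  have h2 := hD z (s/2) (by linarith)
  have h3 := hD z (s/4) (by linarith)
  have h4 := hD z (s/8) (by linarith)
  rw [show 2*(s/2) = s by ring] at h2
  rw [show 2*(s/4) = s/2 by ring] at h3
  rw [show 2*(s/8) = s/4 by ring] at h4
  have h5 : σ (ball z (s/8)) ≤ σ {y | s/2 ≤ dist x y ∧ dist x y < s} := by
    apply measure_mono
    intro y hy
    rw [mem_ball] at hy
    have ht1 := dist_triangle x y z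
    have ht2 := dist_triangle x z y
    rw [hdist] at ht1
    rw [hdist, dist_comm z y] at ht2
    have hc : dist z y = dist y z := dist_comm z y
    constructor
    · linarith
    · linarith
  calc σ (ball x s) ≤ σ (ball z (2*s)) := h0
    _ ≤ ENNReal.ofReal C₀ * σ (ball z s) := h1
    _ ≤ ENNReal.ofReal C₀ * (ENNReal.ofReal C₀ * σ (ball z (s/2))) := by gcongr
    _ ≤ ENNReal.ofReal C₀ * (ENNReal.ofReal C₀ * (ENNReal.ofReal C₀ * σ (ball z (s/4)))) := by gcongr
    _ ≤ ENNReal.ofReal C₀ * (ENNReal.ofReal C₀ * (ENNReal.ofReal C₀ *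
          (ENNReal.ofReal C₀ * σ (ball z (s/8))))) := by gcongr
    _ = ENNReal.ofReal (C₀^4) * σ (ball z (s/8)) := by
        rw [ENNReal.ofReal_pow hC₀]; ring
    _ ≤ ENNReal.ofReal (C₀^4) * σ {y | s/2 ≤ dist x y ∧ dist x y < s} := by gcongr

lemma claim1 {n : ℕ} (hn : 0 < n) (k : ℝ → ℝ)
    (hk0 : ∀ r ∈ Ioi (0:ℝ), 0 ≤ k r) (hmono : AntitoneOn k (Ioi (0:ℝ)))
    (σ : Measure (Euc n)) [IsLocallyFiniteMeasure σ] (C₀ : ℝ) (hC₀ : 0 ≤ C₀)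
    (hD : ∀ (x : Euc n) (ρ : ℝ), 0 < ρ →
      σ (ball x (2 * ρ)) ≤ ENNReal.ofReal C₀ * σ (ball x ρ))
    (x : Euc n) (r : ℝ) (hr : 0 < r) :
    ∫⁻ s in Ioo (0:ℝ) r, ENNReal.ofReal (k s / s) * σ (ball x s) ≤
      ENNReal.ofReal (C₀^4) * ∫⁻ y in ball x r, ENNReal.ofReal (k (dist x y)) ∂σ := by
  set K0 : ℝ → ℝ≥0∞ := (Ioi (0:ℝ)).indicator (fun t => ENNReal.ofReal (k t)) with hK0
  have hK0m : Measurable K0 := measK0 k hmono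
  set S : Set (ℝ × Euc n) := {p | p.1/2 ≤ dist x p.2 ∧ dist x p.2 < p.1} with hS
  have hSm : MeasurableSet S := by
    have : S = {p : ℝ × Euc n | p.1/2 ≤ dist x p.2} ∩ {p : ℝ × Euc n | dist x p.2 < p.1} := rfl
    rw [this]
    exact (measurableSet_le (measurable_fst.div_const 2)
        (continuous_const.dist continuous_snd).measurable).inter
      (measurableSet_lt (continuous_const.dist continuous_snd).measurable measurable_fst)
  set H : ℝ → Euc n → ℝ≥0∞ :=
    fun s y => ENNReal.ofReal s⁻¹ * S.indicator 1 (s, y) * K0 (dist x y) with hH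
  have hHm : Measurable (uncurry H) := by
    have : uncurry H = fun p : ℝ × Euc n =>
        ENNReal.ofReal p.1⁻¹ * S.indicator 1 p * K0 (dist x p.2) := rfl
    rw [this]
    exact ((measurable_fst.inv.ennreal_ofReal).mul
      (measurable_const.indicator hSm)).mul
      (hK0m.comp (continuous_const.dist continuous_snd).measurable)
  have hAm : ∀ s : ℝ, MeasurableSet {y : Euc n | s/2 ≤ dist x y ∧ dist x y < s} := by
    intro s
    have : {y : Euc n | s/2 ≤ dist x y ∧ dist x y < s} =
        {y : Euc n | s/2 ≤ dist x y} ∩ {y : Euc n | dist x y < s} := rfl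
    rw [this]
    exact (measurableSet_le measurable_const
        (continuous_const.dist continuous_id).measurable).inter
      (measurableSet_lt (continuous_const.dist continuous_id).measurable measurable_const)
  have step1 : ∀ s ∈ Ioo (0:ℝ) r, ENNReal.ofReal (k s / s) * σ (ball x s) ≤
      ENNReal.ofReal (C₀^4) * ∫⁻ y, H s y ∂σ := by
    intro s hs
    obtain ⟨hs0, hsr⟩ := hs
    set A : Set (Euc n) := {y | s/2 ≤ dist x y ∧ dist x y < s} with hA
    have hsec : ∀ y : Euc n, H s y =
        ENNReal.ofReal s⁻¹ * A.indicator (fun y => K0 (dist x y)) y := by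
      intro y
      simp only [hH]
      rw [mul_assoc]
      congr 1
      by_cases hy : s/2 ≤ dist x y ∧ dist x y < s
      · rw [indicator_of_mem (show (s,y) ∈ S from hy), indicator_of_mem (show y ∈ A from hy)]
        simp
      · rw [indicator_of_notMem (show (s,y) ∉ S from hy),
          indicator_of_notMem (show y ∉ A from hy)]
        simp
    have hint : ∫⁻ y, H s y ∂σ = ENNReal.ofReal s⁻¹ * ∫⁻ y in A, K0 (dist x y) ∂σ := by
      rw [lintegral_congr hsec, lintegral_const_mul' _ _ ofReal_ne_top,
        lintegral_indicator (hAm s)]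
    calc ENNReal.ofReal (k s / s) * σ (ball x s)
        = ENNReal.ofReal s⁻¹ * (ENNReal.ofReal (k s) * σ (ball x s)) := by
          rw [div_eq_mul_inv, ENNReal.ofReal_mul (hk0 s hs0), mul_comm (ENNReal.ofReal (k s)),
            mul_assoc]
      _ ≤ ENNReal.ofReal s⁻¹ * (ENNReal.ofReal (k s) * (ENNReal.ofReal (C₀^4) * σ A)) := by
          gcongr
          exact annulus_bound hn σ C₀ hC₀ hD x s hs0
      _ = ENNReal.ofReal (C₀^4) * (ENNReal.ofReal s⁻¹ * (ENNReal.ofReal (k s) * σ A)) := by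
          ring
      _ ≤ ENNReal.ofReal (C₀^4) * (ENNReal.ofReal s⁻¹ * ∫⁻ y in A, K0 (dist x y) ∂σ) := by
          gcongr
          rw [← setLIntegral_const A (ENNReal.ofReal (k s))]
          refine setLIntegral_mono' (hAm s) fun y hy => ?_
          have hy0 : (0:ℝ) < dist x y := lt_of_lt_of_le (by linarith) hy.1
          rw [hK0, indicator_of_mem (mem_Ioi.2 hy0)]
          exact ENNReal.ofReal_le_ofReal (hmono (mem_Ioi.2 hy0) (mem_Ioi.2 hs0) hy.2.le)
      _ = ENNReal.ofReal (C₀^4) * ∫⁻ y, H s y ∂σ := by rw [hint]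
  calc ∫⁻ s in Ioo (0:ℝ) r, ENNReal.ofReal (k s / s) * σ (ball x s)
      ≤ ∫⁻ s in Ioo (0:ℝ) r, ENNReal.ofReal (C₀^4) * ∫⁻ y, H s y ∂σ :=
        setLIntegral_mono' measurableSet_Ioo step1
    _ = ENNReal.ofReal (C₀^4) * ∫⁻ s in Ioo (0:ℝ) r, ∫⁻ y, H s y ∂σ :=
        lintegral_const_mul' _ _ ofReal_ne_top
    _ = ENNReal.ofReal (C₀^4) * ∫⁻ y, (∫⁻ s in Ioo (0:ℝ) r, H s y) ∂σ := by
        rw [lintegral_lintegral_swap hHm.aemeasurable]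
    _ ≤ ENNReal.ofReal (C₀^4) * ∫⁻ y in ball x r, ENNReal.ofReal (k (dist x y)) ∂σ := by
        refine mul_le_mul_right ?_ _
        rw [← lintegral_indicator measurableSet_ball]
        refine lintegral_mono fun y => ?_
        by_cases hd0 : 0 < dist x y
        · by_cases hdr : dist x y < r
          · have hyball : y ∈ ball x r := by rwa [mem_ball, dist_comm]
            have h1 : (∫⁻ s in Ioo (0:ℝ) r, H s y) ≤ K0 (dist x y) := by
              calc ∫⁻ s in Ioo (0:ℝ) r, H s y
                  ≤ ∫⁻ s, (Ioc (dist x y) (2*dist x y)).indicator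
                      (fun s => ENNReal.ofReal s⁻¹ * K0 (dist x y)) s := by
                    refine le_trans (setLIntegral_le_lintegral _ _) (lintegral_mono fun s => ?_)
                    by_cases hsmem : s ∈ Ioc (dist x y) (2*dist x y)
                    · rw [indicator_of_mem hsmem]
                      simp only [hH]
                      have : S.indicator (1 : ℝ × Euc n → ℝ≥0∞) (s,y) ≤ 1 := by
                        by_cases h : (s,y) ∈ S <;> simp [h]
                      calc ENNReal.ofReal s⁻¹ * S.indicator 1 (s,y) * K0 (dist x y)
                          ≤ ENNReal.ofReal s⁻¹ * 1 * K0 (dist x y) := by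
                            gcongr
                        _ = ENNReal.ofReal s⁻¹ * K0 (dist x y) := by rw [mul_one]
                    · rw [indicator_of_notMem hsmem]
                      have hns : (s,y) ∉ S := by
                        intro hmem
                        exact hsmem ⟨hmem.2, by
                          have := hmem.1
                          simp only [hS, mem_setOf_eq] at this ⊢
                          linarith⟩
                      simp only [hH]
                      rw [indicator_of_notMem hns]
                      simp
                _ = ∫⁻ s in Ioc (dist x y) (2*dist x y), ENNReal.ofReal s⁻¹ * K0 (dist x y) :=
                    lintegral_indicator measurableSet_Ioc _
                _ ≤ ∫⁻ s in Ioc (dist x y) (2*dist x y),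
                      ENNReal.ofReal (dist x y)⁻¹ * K0 (dist x y) := by
                    refine setLIntegral_mono' measurableSet_Ioc fun s hsm => ?_
                    gcongr
                    exact hsm.1.le
                _ = ENNReal.ofReal (dist x y)⁻¹ * K0 (dist x y) *
                      volume (Ioc (dist x y) (2*dist x y)) := setLIntegral_const _ _
                _ = K0 (dist x y) := by
                    rw [Real.volume_Ioc, show 2*dist x y - dist x y = dist x y by ring,
                      mul_comm (ENNReal.ofReal (dist x y)⁻¹), mul_assoc,
                      ← ENNReal.ofReal_mul (by positivity), inv_mul_cancel₀ hd0.ne']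
                    simp
            refine h1.trans ?_
            rw [indicator_of_mem hyball]
            exact Set.indicator_le_self _ _ _
          · have hz : ∀ s ∈ Ioo (0:ℝ) r, H s y = 0 := by
              intro s hsm
              have hns : (s,y) ∉ S := by
                intro hmem
                exact hdr (lt_trans hmem.2 hsm.2)
              simp only [hH]
              rw [indicator_of_notMem hns]
              simp
            rw [setLIntegral_congr_fun measurableSet_Ioo hz]
            simp
        · have hz : ∀ s, H s y = 0 := by
            intro s
            have : K0 (dist x y) = 0 := by
              rw [hK0, indicator_of_notMem (by simpa using hd0)]
            simp only [hH]
            rw [this, mul_zero]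
          simp [hz]

lemma claim2 {n : ℕ} (hn : 0 < n) (k : ℝ → ℝ)
    (hk0 : ∀ r ∈ Ioi (0:ℝ), 0 ≤ k r) (hmono : AntitoneOn k (Ioi (0:ℝ)))
    (σ : Measure (Euc n)) [IsLocallyFiniteMeasure σ] (C₀ : ℝ) (hC₀ : 1 ≤ C₀)
    (hD : ∀ (x : Euc n) (ρ : ℝ), 0 < ρ →
      σ (ball x (2 * ρ)) ≤ ENNReal.ofReal C₀ * σ (ball x ρ))
    (x : Euc n) (r : ℝ) (hr : 0 < r) :
    ∫⁻ y in ball x r, ENNReal.ofReal (k (dist x y)) ∂σ ≤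
      ENNReal.ofReal (2*C₀ + 2*C₀^2) *
        ∫⁻ s in Ioo (0:ℝ) r, ENNReal.ofReal (k s / s) * σ (ball x s) := by
  have hC₀0 : (0:ℝ) ≤ C₀ := by linarith
  set K0 : ℝ → ℝ≥0∞ := (Ioi (0:ℝ)).indicator (fun t => ENNReal.ofReal (k t)) with hK0
  have hK0m : Measurable K0 := measK0 k hmono
  set N : ℝ≥0∞ := ∫⁻ s in Ioo (0:ℝ) r, ENNReal.ofReal (k s / s) * σ (ball x s) with hN
  have hNF : ∀ s ∈ Ioo (0:ℝ) r, K0 s * ENNReal.ofReal s⁻¹ = ENNReal.ofReal (k s / s) := by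
    intro s hs
    rw [hK0, indicator_of_mem (mem_Ioi.2 hs.1), ← ENNReal.ofReal_mul (hk0 s hs.1),
      ← div_eq_mul_inv]
  have hatom : σ {x} = 0 := atom_zero hn σ C₀ hD x
  -- replace the integrand by the truncated kernel
  have step0 : ∫⁻ y in ball x r, ENNReal.ofReal (k (dist x y)) ∂σ =
      ∫⁻ y in ball x r, K0 (dist x y) ∂σ := by
    apply lintegral_congr_ae
    rw [Filter.eventuallyEq_iff_exists_mem]
    refine ⟨{y | y ≠ x}, ?_, ?_⟩
    · rw [mem_ae_iff]
      have hcompl : {y : Euc n | y ≠ x}ᶜ = {x} := by ext y; simp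
      rw [hcompl]
      exact measure_mono_null (fun y hy => hy) (le_antisymm
        (le_trans (Measure.restrict_apply_le _ _) (le_of_eq hatom)) (zero_le))
    · intro y hy
      have hd0 : 0 < dist x y := dist_pos.2 fun h => hy h.symm
      exact (indicator_of_mem (mem_Ioi.2 hd0) (fun t => ENNReal.ofReal (k t))).symm
  rw [step0]
  -- split the ball
  have hunion : ball x r = ball x (r/2) ∪ (ball x r \ ball x (r/2)) :=
    (union_diff_cancel (ball_subset_ball (by linarith))).symm
  rw [hunion, lintegral_union (measurableSet_ball.diff measurableSet_ball) disjoint_sdiff_right]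
  -- outer shell estimate
  have hI2 : ∫⁻ y in ball x r \ ball x (r/2), K0 (dist x y) ∂σ ≤
      ENNReal.ofReal (k (r/2)) * σ (ball x r) := by
    calc ∫⁻ y in ball x r \ ball x (r/2), K0 (dist x y) ∂σ
        ≤ ∫⁻ _ in ball x r \ ball x (r/2), ENNReal.ofReal (k (r/2)) ∂σ := by
          refine setLIntegral_mono' (measurableSet_ball.diff measurableSet_ball) fun y hy => ?_
          obtain ⟨hy1, hy2⟩ := hy
          rw [mem_ball] at hy1
          rw [mem_ball, not_lt] at hy2
          have hd : r/2 ≤ dist x y := by rwa [dist_comm]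
          have hd0 : 0 < dist x y := lt_of_lt_of_le (by linarith) hd
          rw [hK0, indicator_of_mem (mem_Ioi.2 hd0)]
          exact ENNReal.ofReal_le_ofReal (hmono (mem_Ioi.2 (by linarith)) (mem_Ioi.2 hd0) hd)
      _ = ENNReal.ofReal (k (r/2)) * σ (ball x r \ ball x (r/2)) := setLIntegral_const _ _
      _ ≤ ENNReal.ofReal (k (r/2)) * σ (ball x r) := by
          gcongr
          exact diff_subset
  -- lower bound for N in terms of k(r/2)
  have hsubN : Ioo (r/4) (r/2) ⊆ Ioo (0:ℝ) r := fun s hs =>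
    ⟨lt_trans (by linarith) hs.1, lt_trans hs.2 (by linarith)⟩
  have hNge : ENNReal.ofReal (k (r/2) * (2/r)) * σ (ball x (r/4)) * ENNReal.ofReal (r/4) ≤ N := by
    calc ENNReal.ofReal (k (r/2) * (2/r)) * σ (ball x (r/4)) * ENNReal.ofReal (r/4)
        = ∫⁻ _ in Ioo (r/4) (r/2), ENNReal.ofReal (k (r/2) * (2/r)) * σ (ball x (r/4)) := by
          rw [setLIntegral_const, Real.volume_Ioo, show r/2 - r/4 = r/4 by ring]
      _ ≤ ∫⁻ s in Ioo (r/4) (r/2), ENNReal.ofReal (k s / s) * σ (ball x s) := by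
          refine setLIntegral_mono' measurableSet_Ioo fun s hs => ?_
          obtain ⟨hs1, hs2⟩ := hs
          have hs0 : 0 < s := by linarith
          refine mul_le_mul' ?_ (measure_mono (ball_subset_ball (by linarith)))
          rw [div_eq_mul_inv]
          refine ENNReal.ofReal_le_ofReal ?_
          have hk1 : k (r/2) ≤ k s := hmono (mem_Ioi.2 hs0) (mem_Ioi.2 (by linarith)) (by linarith)
          have hk2 : (2/r) ≤ s⁻¹ := by
            rw [div_le_iff₀ hr, inv_mul_eq_div, le_div_iff₀ hs0]
            linarith
          exact mul_le_mul hk1 hk2 (by positivity) (hk0 s (mem_Ioi.2 hs0))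
      _ ≤ N := lintegral_mono_set hsubN
  have hNlow : ENNReal.ofReal (k (r/2)) * σ (ball x r) ≤ ENNReal.ofReal (2*C₀^2) * N := by
    have hd1 := hD x (r/2) (by linarith)
    have hd2 := hD x (r/4) (by linarith)
    rw [show 2*(r/2) = r by ring] at hd1
    rw [show 2*(r/4) = r/2 by ring] at hd2
    calc ENNReal.ofReal (k (r/2)) * σ (ball x r)
        ≤ ENNReal.ofReal (k (r/2)) * (ENNReal.ofReal C₀ * (ENNReal.ofReal C₀ * σ (ball x (r/4)))) := by
          gcongr
          exact hd1.trans (by gcongr)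
      _ = ENNReal.ofReal (2*C₀^2) *
            (ENNReal.ofReal (k (r/2) * (2/r)) * σ (ball x (r/4)) * ENNReal.ofReal (r/4)) := by
          have hkr2 : 0 ≤ k (r/2) := hk0 _ (mem_Ioi.2 (by linarith))
          rw [show ENNReal.ofReal (2*C₀^2) *
              (ENNReal.ofReal (k (r/2) * (2/r)) * σ (ball x (r/4)) * ENNReal.ofReal (r/4)) =
              (ENNReal.ofReal (2*C₀^2) * ENNReal.ofReal (k (r/2) * (2/r)) *
                ENNReal.ofReal (r/4)) * σ (ball x (r/4)) by ring]
          rw [show ENNReal.ofReal (k (r/2)) *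
              (ENNReal.ofReal C₀ * (ENNReal.ofReal C₀ * σ (ball x (r/4)))) =
              (ENNReal.ofReal (k (r/2)) * ENNReal.ofReal C₀ * ENNReal.ofReal C₀) *
                σ (ball x (r/4)) by ring]
          congr 1
          rw [← ENNReal.ofReal_mul (by positivity), ← ENNReal.ofReal_mul (by positivity),
            ← ENNReal.ofReal_mul (by positivity), ← ENNReal.ofReal_mul (by positivity)]
          congr 1
          field_simp
          ring
      _ ≤ ENNReal.ofReal (2*C₀^2) * N := mul_le_mul_right hNge _
  -- inner part
  set S' : Set (ℝ × Euc n) := {p | p.1 < dist x p.2 ∧ dist x p.2 < 2*p.1} with hS'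
  have hS'm : MeasurableSet S' := by
    have : S' = {p : ℝ × Euc n | p.1 < dist x p.2} ∩ {p : ℝ × Euc n | dist x p.2 < 2*p.1} := rfl
    rw [this]
    exact (measurableSet_lt measurable_fst
        (continuous_const.dist continuous_snd).measurable).inter
      (measurableSet_lt (continuous_const.dist continuous_snd).measurable
        (measurable_fst.const_mul 2))
  set H' : ℝ → Euc n → ℝ≥0∞ :=
    fun s y => (K0 s * ENNReal.ofReal s⁻¹) * S'.indicator 1 (s, y) with hH'
  have hI1 : ∫⁻ y in ball x (r/2), K0 (dist x y) ∂σ ≤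
      2 * ∫⁻ y in ball x (r/2), (∫⁻ s in Ioo (0:ℝ) r, H' s y) ∂σ := by
    rw [← lintegral_const_mul' _ _ (by simp : (2:ℝ≥0∞) ≠ ⊤)]
    refine setLIntegral_mono' measurableSet_ball fun y hy => ?_
    by_cases hd0 : 0 < dist x y
    · have hdr2 : dist x y < r/2 := by rwa [mem_ball, dist_comm] at hy
      set d : ℝ := dist x y with hd
      have hsub2 : Ioo (d/2) d ⊆ Ioo (0:ℝ) r := fun s hs =>
        ⟨lt_trans (by positivity) hs.1, by
          have := hs.2; simp only [mem_Ioo] at *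
          linarith⟩
      have hinner : (∫⁻ s in Ioo (0:ℝ) r, H' s y) =
          ∫⁻ s in Ioo (d/2) d, K0 s * ENNReal.ofReal s⁻¹ := by
        have hsec : ∀ s : ℝ, H' s y =
            (Ioo (d/2) d).indicator (fun s => K0 s * ENNReal.ofReal s⁻¹) s := by
          intro s
          by_cases hs : s ∈ Ioo (d/2) d
          · rw [indicator_of_mem hs]
            simp only [hH']
            rw [indicator_of_mem (show (s,y) ∈ S' from ⟨hs.2, by
              have := hs.1; simp only [mem_Ioo] at *; linarith⟩)]
            simp
          · rw [indicator_of_notMem hs]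
            simp only [hH']
            rw [indicator_of_notMem (show (s,y) ∉ S' from fun hmem =>
              hs ⟨by have := hmem.2; simp only [hS', mem_setOf_eq] at this; linarith, hmem.1⟩)]
            simp
        rw [setLIntegral_congr_fun measurableSet_Ioo (fun s _ => hsec s),
          lintegral_indicator measurableSet_Ioo, Measure.restrict_restrict measurableSet_Ioo,
          inter_eq_self_of_subset_left hsub2]
      have hlow : ENNReal.ofReal (k d) * ENNReal.ofReal d⁻¹ * ENNReal.ofReal (d/2) ≤
          ∫⁻ s in Ioo (d/2) d, K0 s * ENNReal.ofReal s⁻¹ := by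
        calc ENNReal.ofReal (k d) * ENNReal.ofReal d⁻¹ * ENNReal.ofReal (d/2)
            = ∫⁻ _ in Ioo (d/2) d, ENNReal.ofReal (k d) * ENNReal.ofReal d⁻¹ := by
              rw [setLIntegral_const, Real.volume_Ioo, show d - d/2 = d/2 by ring]
          _ ≤ ∫⁻ s in Ioo (d/2) d, K0 s * ENNReal.ofReal s⁻¹ := by
              refine setLIntegral_mono' measurableSet_Ioo fun s hs => ?_
              have hs0 : 0 < s := lt_trans (by positivity) hs.1
              rw [hK0, indicator_of_mem (mem_Ioi.2 hs0)]
              refine mul_le_mul' (ENNReal.ofReal_le_ofReal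
                (hmono (mem_Ioi.2 hs0) (mem_Ioi.2 hd0) hs.2.le))
                (ENNReal.ofReal_le_ofReal (by
                  rw [inv_le_inv₀ hd0 hs0]
                  exact hs.2.le))
      have heq : (2:ℝ≥0∞) * (ENNReal.ofReal (k d) * ENNReal.ofReal d⁻¹ * ENNReal.ofReal (d/2)) =
          ENNReal.ofReal (k d) := by
        rw [mul_assoc (ENNReal.ofReal (k d)), ← ENNReal.ofReal_mul (by positivity),
          show d⁻¹ * (d/2) = 1/2 by field_simp]
        rw [show (2:ℝ≥0∞) = ENNReal.ofReal 2 by simp, mul_comm (ENNReal.ofReal 2),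
          mul_assoc, ← ENNReal.ofReal_mul (by norm_num : (0:ℝ) ≤ 1/2)]
        norm_num
      calc K0 d = ENNReal.ofReal (k d) := by rw [hK0, indicator_of_mem (mem_Ioi.2 hd0)]
        _ = 2 * (ENNReal.ofReal (k d) * ENNReal.ofReal d⁻¹ * ENNReal.ofReal (d/2)) := heq.symm
        _ ≤ 2 * ∫⁻ s in Ioo (d/2) d, K0 s * ENNReal.ofReal s⁻¹ := mul_le_mul_right hlow _
        _ = 2 * ∫⁻ s in Ioo (0:ℝ) r, H' s y := by rw [hinner]
    · rw [hK0, indicator_of_notMem (by simpa using hd0)]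
      exact zero_le
  -- swap the inner double integral
  have hH'm : Measurable (uncurry fun (y : Euc n) (s : ℝ) => H' s y) := by
    have : (uncurry fun (y : Euc n) (s : ℝ) => H' s y) = fun p : Euc n × ℝ =>
        (K0 p.2 * ENNReal.ofReal p.2⁻¹) * S'.indicator 1 (p.2, p.1) := rfl
    rw [this]
    refine Measurable.mul ?_ ?_
    · exact ((hK0m.comp measurable_snd).mul (measurable_snd.inv.ennreal_ofReal))
    · exact (measurable_const.indicator hS'm).comp (measurable_snd.prodMk measurable_fst)
  have hswap : ∫⁻ y in ball x (r/2), (∫⁻ s in Ioo (0:ℝ) r, H' s y) ∂σ =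
      ∫⁻ s in Ioo (0:ℝ) r, (∫⁻ y in ball x (r/2), H' s y ∂σ) := by
    exact lintegral_lintegral_swap hH'm.aemeasurable
  have hTbound : ∫⁻ s in Ioo (0:ℝ) r, (∫⁻ y in ball x (r/2), H' s y ∂σ) ≤
      ENNReal.ofReal C₀ * N := by
    calc ∫⁻ s in Ioo (0:ℝ) r, (∫⁻ y in ball x (r/2), H' s y ∂σ)
        ≤ ∫⁻ s in Ioo (0:ℝ) r, ENNReal.ofReal C₀ * (ENNReal.ofReal (k s / s) * σ (ball x s)) := by
          refine setLIntegral_mono' measurableSet_Ioo fun s hs => ?_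
          have hs0 : 0 < s := hs.1
          have hsecy : ∀ y : Euc n, S'.indicator (1 : ℝ × Euc n → ℝ≥0∞) (s, y) =
              ({y : Euc n | s < dist x y ∧ dist x y < 2*s}).indicator 1 y := by
            intro y
            by_cases hy : s < dist x y ∧ dist x y < 2*s
            · rw [indicator_of_mem (show (s,y) ∈ S' from hy), indicator_of_mem
                (show y ∈ {y : Euc n | s < dist x y ∧ dist x y < 2*s} from hy)]
              rfl
            · rw [indicator_of_notMem (show (s,y) ∉ S' from hy), indicator_of_notMem
                (show y ∉ {y : Euc n | s < dist x y ∧ dist x y < 2*s} from hy)]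
          have hEm : MeasurableSet {y : Euc n | s < dist x y ∧ dist x y < 2*s} := by
            have : {y : Euc n | s < dist x y ∧ dist x y < 2*s} =
                {y : Euc n | s < dist x y} ∩ {y : Euc n | dist x y < 2*s} := rfl
            rw [this]
            exact (measurableSet_lt measurable_const
                (continuous_const.dist continuous_id).measurable).inter
              (measurableSet_lt (continuous_const.dist continuous_id).measurable measurable_const)
          calc ∫⁻ y in ball x (r/2), H' s y ∂σ
              = (K0 s * ENNReal.ofReal s⁻¹) *
                  ∫⁻ y in ball x (r/2),
                    ({y : Euc n | s < dist x y ∧ dist x y < 2*s}).indicator 1 y ∂σ := by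
                simp only [hH']
                rw [← lintegral_const_mul' _ _
                  (by exact ENNReal.mul_ne_top (by
                    rw [hK0]
                    by_cases hmem : s ∈ Ioi (0:ℝ)
                    · rw [indicator_of_mem hmem]; exact ofReal_ne_top
                    · rw [indicator_of_notMem hmem]; simp) ofReal_ne_top)]
                refine setLIntegral_congr_fun measurableSet_ball (fun y _ => ?_)
                rw [hsecy y]
              _ = (K0 s * ENNReal.ofReal s⁻¹) *
                  σ ({y : Euc n | s < dist x y ∧ dist x y < 2*s} ∩ ball x (r/2)) := by
                rw [lintegral_indicator_one₀ hEm.nullMeasurableSet, Measure.restrict_apply hEm]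
              _ ≤ (K0 s * ENNReal.ofReal s⁻¹) * σ (ball x (2*s)) := by
                gcongr
                intro y hy
                rw [mem_ball, dist_comm]
                exact hy.1.2
              _ ≤ (K0 s * ENNReal.ofReal s⁻¹) * (ENNReal.ofReal C₀ * σ (ball x s)) := by
                gcongr
                exact hD x s hs0
              _ = ENNReal.ofReal C₀ * (ENNReal.ofReal (k s / s) * σ (ball x s)) := by
                rw [hNF s hs]
                ring
      _ = ENNReal.ofReal C₀ * N := by
          rw [lintegral_const_mul' _ _ ofReal_ne_top]
  -- put it together
  calc (∫⁻ y in ball x (r/2), K0 (dist x y) ∂σ) +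
        ∫⁻ y in ball x r \ ball x (r/2), K0 (dist x y) ∂σ
      ≤ 2 * (ENNReal.ofReal C₀ * N) + ENNReal.ofReal (2*C₀^2) * N := by
        refine add_le_add ?_ (hI2.trans hNlow)
        refine hI1.trans ?_
        rw [hswap]
        exact mul_le_mul_right hTbound _
    _ = ENNReal.ofReal (2*C₀ + 2*C₀^2) * N := by
        rw [ENNReal.ofReal_add (by positivity) (by positivity), add_mul]
        congr 1
        rw [show (2:ℝ≥0∞) = ENNReal.ofReal 2 by simp, ← mul_assoc,
          ← ENNReal.ofReal_mul (by norm_num)]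

/-- If `k : (0,∞) → [0,∞)` is nonincreasing and lower semicontinuous and
`σ` is a locally finite positive Borel measure on `ℝ^n` satisfying a doubling condition,
then there is `C > 0` such that for all `x ∈ ℝ^n` and `r > 0`,
`(1/C) k̄(r)(x) ≤ (1/σ(B(x,r))) ∫_{B(x,r)} k(|x-y|) dσ(y) ≤ C k̄(r)(x)`. -/
theorem stmt12 (n : ℕ) (hn : 0 < n) (k : ℝ → ℝ)
    (hk0 : ∀ r ∈ Ioi (0:ℝ), 0 ≤ k r) (hmono : AntitoneOn k (Ioi (0:ℝ)))
    (hlsc : LowerSemicontinuousOn k (Ioi (0:ℝ)))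
    (σ : Measure (Euc n)) [IsLocallyFiniteMeasure σ] (hσ : Doubling n σ) :
    ∃ C : ℝ, 0 < C ∧ ∀ (x : Euc n) (r : ℝ), 0 < r →
      ENNReal.ofReal C⁻¹ * kbar n σ k r x ≤
          (σ (ball x r))⁻¹ * ∫⁻ y in ball x r, ENNReal.ofReal (k (dist x y)) ∂σ ∧
        (σ (ball x r))⁻¹ * (∫⁻ y in ball x r, ENNReal.ofReal (k (dist x y)) ∂σ) ≤
          ENNReal.ofReal C * kbar n σ k r x := by
  obtain ⟨C₀', hC₀'pos, hD'⟩ := hσ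
  set C₀ : ℝ := max C₀' 1 with hC₀def
  have hC₀ : 1 ≤ C₀ := le_max_right _ _
  have hC₀pos : (0:ℝ) < C₀ := by linarith
  have hD : ∀ (x : Euc n) (ρ : ℝ), 0 < ρ →
      σ (ball x (2 * ρ)) ≤ ENNReal.ofReal C₀ * σ (ball x ρ) := fun x ρ hρ =>
    (hD' x ρ hρ).trans (mul_le_mul_left (ENNReal.ofReal_le_ofReal (le_max_left _ _)) _)
  set C : ℝ := 2*C₀ + 2*C₀^2 + C₀^4 with hC
  have hCpos : (0:ℝ) < C := by nlinarith [pow_pos hC₀pos 2, pow_pos hC₀pos 4]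
  refine ⟨C, hCpos, fun x r hr => ?_⟩
  have h1 : (∫⁻ s in Ioo (0:ℝ) r, ENNReal.ofReal (k s / s) * σ (ball x s)) ≤
      ENNReal.ofReal C * ∫⁻ y in ball x r, ENNReal.ofReal (k (dist x y)) ∂σ :=
    (claim1 hn k hk0 hmono σ C₀ (by linarith) hD x r hr).trans
      (mul_le_mul_left (ENNReal.ofReal_le_ofReal (by nlinarith [pow_pos hC₀pos 2])) _)
  have h2 : (∫⁻ y in ball x r, ENNReal.ofReal (k (dist x y)) ∂σ) ≤
      ENNReal.ofReal C * ∫⁻ s in Ioo (0:ℝ) r, ENNReal.ofReal (k s / s) * σ (ball x s) :=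
    (claim2 hn k hk0 hmono σ C₀ hC₀ hD x r hr).trans
      (mul_le_mul_left (ENNReal.ofReal_le_ofReal (by nlinarith [pow_pos hC₀pos 4])) _)
  constructor
  · have h3 : ENNReal.ofReal C⁻¹ *
        (∫⁻ s in Ioo (0:ℝ) r, ENNReal.ofReal (k s / s) * σ (ball x s)) ≤
        ∫⁻ y in ball x r, ENNReal.ofReal (k (dist x y)) ∂σ := by
      calc ENNReal.ofReal C⁻¹ * (∫⁻ s in Ioo (0:ℝ) r, ENNReal.ofReal (k s / s) * σ (ball x s))
          ≤ ENNReal.ofReal C⁻¹ * (ENNReal.ofReal C *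
              ∫⁻ y in ball x r, ENNReal.ofReal (k (dist x y)) ∂σ) := mul_le_mul_right h1 _
        _ = (ENNReal.ofReal C⁻¹ * ENNReal.ofReal C) *
              ∫⁻ y in ball x r, ENNReal.ofReal (k (dist x y)) ∂σ := (mul_assoc _ _ _).symm
        _ = ∫⁻ y in ball x r, ENNReal.ofReal (k (dist x y)) ∂σ := by
            rw [← ENNReal.ofReal_mul (by positivity), inv_mul_cancel₀ hCpos.ne']
            simp
    simp only [kbar]
    rw [← mul_assoc, mul_comm (ENNReal.ofReal C⁻¹), mul_assoc]
    exact mul_le_mul_right h3 _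
  · simp only [kbar]
    calc (σ (ball x r))⁻¹ * ∫⁻ y in ball x r, ENNReal.ofReal (k (dist x y)) ∂σ
        ≤ (σ (ball x r))⁻¹ * (ENNReal.ofReal C *
            ∫⁻ s in Ioo (0:ℝ) r, ENNReal.ofReal (k s / s) * σ (ball x s)) :=
          mul_le_mul_right h2 _
      _ = ENNReal.ofReal C * ((σ (ball x r))⁻¹ *
            ∫⁻ s in Ioo (0:ℝ) r, ENNReal.ofReal (k s / s) * σ (ball x s)) := by ring
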